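/- If a connected graph G factors as a Cartesian product G ≅ H □ K₂ with respect to every Θ-class (equivalence class of the Djoković relation) of a partial cube G, i.e., for each Θ-class E_i the halfspaces G_i^+ and G_i^- are isomorphic and every vertex of G_i^+ has a unique neighbor in G_i^-, then G is isomorphic to a hypercube. -/

import Mathlib

open Finset
open scoped Classical

variable {U : Type*}

/-- Hamming distance between two vertices of the hypercube `U → Bool`. -/
def hDist [Fintype U] [DecidableEq U] (x y : U → Bool) : ℕ :=
  (Finset.univ.filter fun i => x i ≠ y i).card

/-- The hypercube graph on `U → Bool`: two vertices are adjacent iff they differ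
in exactly one coordinate. -/
def cubeGraph (U : Type*) [Fintype U] [DecidableEq U] : SimpleGraph (U → Bool) where
  Adj x y := hDist x y = 1
  symm := by
    constructor
    intro x y h
    have hs : (Finset.univ.filter fun i => y i ≠ x i) =
        (Finset.univ.filter fun i => x i ≠ y i) := by
      apply Finset.filter_congr
      intro i _
      exact ne_comm
    simpa [hDist, hs] using h
  loopless := by
    constructor
    intro x h
    simp [hDist] at h

/-- Distance between `x` and `y` inside the subgraph of the hypercube induced by `A`
(`0` if one of them is not in `A`). -/
noncomputable def dIn [Fintype U] [DecidableEq U] (A : Set (U → Bool)) (x y : U → Bool) : ℕ :=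
  if h : x ∈ A ∧ y ∈ A then ((cubeGraph U).induce A).dist ⟨x, h.1⟩ ⟨y, h.2⟩ else 0

/-- A set of vertices of the hypercube is a partial cube if its induced graph is connected
and the induced graph distance coincides with the Hamming distance
(i.e. it is an isometric subgraph of the hypercube). -/
def IsPartialCube [Fintype U] [DecidableEq U] (A : Set (U → Bool)) : Prop :=
  ((cubeGraph U).induce A).Connected ∧ ∀ x ∈ A, ∀ y ∈ A, dIn A x y = hDist x y

/-- `A` shatters the coordinate set `X`. -/
def Shatters [Fintype U] [DecidableEq U] (A : Set (U → Bool)) (X : Finset U) : Prop :=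
  ∀ g : U → Bool, ∃ a ∈ A, ∀ i ∈ X, a i = g i

/-- `A` strongly shatters `X`: it contains a full subcube over the coordinates `X`. -/
def StronglyShatters [Fintype U] [DecidableEq U] (A : Set (U → Bool)) (X : Finset U) : Prop :=
  ∃ a : U → Bool, ∀ g : U → Bool, (fun i => if i ∈ X then g i else a i) ∈ A

/-- An ample set family: every shattered set is strongly shattered. -/
def IsAmple [Fintype U] [DecidableEq U] (A : Set (U → Bool)) : Prop :=
  ∀ X : Finset U, Shatters A X → StronglyShatters A X

/-- If a connected partial cube `S` factors as `G_i^+ □ K₂` with respect to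
every Θ-class (i.e. for every coordinate `i` on which `S` is non-constant, every vertex of `S`
has its `i`-flip also in `S`, which says that each vertex of one halfspace has a unique
neighbour in the other), then `S` is a hypercube (a full subcube of the ambient cube). -/
theorem stmt0 [Fintype U] [DecidableEq U] (S : Set (U → Bool))
    (hne : S.Nonempty) (hpc : IsPartialCube S)
    (hfac : ∀ i : U, (∃ s ∈ S, ∃ t ∈ S, s i ≠ t i) →
      ∀ s ∈ S, Function.update s i (!(s i)) ∈ S) :
    ∃ (X : Finset U) (b : U → Bool), S = {f | ∀ i ∉ X, f i = b i} := by
  clear hpc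
  obtain ⟨b, hb⟩ := hne
  refine ⟨Finset.univ.filter (fun i => ∃ s ∈ S, ∃ t ∈ S, s i ≠ t i), b, ?_⟩
  have key : ∀ n : ℕ, ∀ f : U → Bool,
      (∀ i, f i ≠ b i → ∃ s ∈ S, ∃ t ∈ S, s i ≠ t i) →
      (Finset.univ.filter fun i => f i ≠ b i).card = n → f ∈ S := by
    intro n
    induction n with
    | zero =>
      intro f hf hcard
      have : f = b := by
        funext j
        by_contra hj
        have : j ∈ (Finset.univ.filter fun i => f i ≠ b i) := by simp [hj]
        rw [Finset.card_eq_zero] at hcard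
        simp [hcard] at this
      exact this ▸ hb
    | succ n ih =>
      intro f hf hcard
      have hne' : (Finset.univ.filter fun i => f i ≠ b i).Nonempty := by
        rw [← Finset.card_pos, hcard]; omega
      obtain ⟨i, hi⟩ := hne'
      have hfi : f i ≠ b i := by simpa using hi
      set g := Function.update f i (b i) with hg
      have hgmem : g ∈ S := by
        apply ih
        · intro j hj
          apply hf
          intro hjeq
          apply hj
          have hji : j ≠ i := by
            intro h; subst h; simp [hg, Function.update_self] at hj
          simp [hg, Function.update_of_ne hji, hjeq]
        · have hset : (Finset.univ.filter fun j => g j ≠ b j)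
              = (Finset.univ.filter fun j => f j ≠ b j).erase i := by
            ext j
            by_cases hji : j = i
            · subst hji; simp [hg, Function.update_self]
            · simp [hg, Function.update_of_ne hji, hji]
          rw [hset, Finset.card_erase_of_mem (by simpa using hfi), hcard]
          omega
      have := hfac i (hf i hfi) g hgmem
      have hfeq : Function.update g i (!(g i)) = f := by
        funext j
        by_cases hji : j = i
        · subst hji
          simp only [hg, Function.update_self]
          cases hb' : b j <;> cases hf' : f j <;>
            first | rfl | (exact absurd (hf'.trans hb'.symm) hfi)
        · simp [Function.update_of_ne hji, hg]
      rwa [hfeq] at this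
  ext f
  simp only [Finset.mem_filter, Finset.mem_univ, true_and, Set.mem_setOf_eq]
  constructor
  · intro hfS i hi
    by_contra hne'
    exact hi ⟨f, hfS, b, hb, hne'⟩
  · intro hf
    apply key _ f _ rfl
    intro i hfi
    by_contra h
    exact hfi (hf i h)
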